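/- Let s be a simple reflection of Wᵛ and v ∈ Wᵛ with sv > v (i.e. ℓ(sv) > ℓ(v)). Then for every w ∈ Wᵛ, ℓ_{sv}(w) = ℓ_v(sw) − 1, where ℓ_v(w) = |Inv(w⁻¹)∖Inv(v⁻¹)| − |Inv(w⁻¹)∩Inv(v⁻¹)|. -/

import Mathlib

/-- Sign of an integer, with the convention `isgn 0 = 1`. -/
def isgn (n : ℤ) : ℤ := if 0 ≤ n then 1 else -1

/-- The multiplicative group structure on `AddAut A` (composition), as in the older Mathlib. -/
instance AddAut.group {A : Type*} [Add A] : Group (AddAut A) where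
  mul g h := AddEquiv.trans h g
  one := AddEquiv.refl _
  inv := AddEquiv.symm
  mul_assoc _ _ _ := rfl
  one_mul _ := rfl
  mul_one _ := rfl
  inv_mul_cancel := AddEquiv.self_trans_symm

/-- A Kac–Moody root datum: a finite index set `I`, a generalized Cartan matrix `A`,
free `ℤ`-modules `X` and `Y` of finite rank in perfect duality `pairE`, and linearly
independent families of simple roots `α` and simple coroots `αv` with
`⟨αv i, α j⟩ = A i j`. -/
structure KM (I X Y : Type*) [Fintype I] [AddCommGroup X] [AddCommGroup Y] where
  A : I → I → ℤ
  pairE : Y ≃+ (X →+ ℤ)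
  α : I → X
  αv : I → Y
  pair_av_a : ∀ i j, pairE (αv i) (α j) = A i j
  A_diag : ∀ i, A i i = 2
  A_offdiag : ∀ i j, i ≠ j → A i j ≤ 0
  A_zero_iff : ∀ i j, A i j = 0 → A j i = 0
  freeX : Module.Free ℤ X
  freeY : Module.Free ℤ Y
  finX : Module.Finite ℤ X
  finY : Module.Finite ℤ Y
  indep_α : LinearIndependent ℤ α
  indep_αv : LinearIndependent ℤ αv

namespace KM

variable {I X Y : Type*} [Fintype I] [AddCommGroup X] [AddCommGroup Y] (D : KM I X Y)

open scoped Classical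

/-- The duality pairing `⟨y, x⟩`. -/
def pr (y : Y) (x : X) : ℤ := D.pairE y x

/-- Underlying function of the simple reflection `s_i` on `X`. -/
def sXfun (i : I) (x : X) : X := x - D.pr (D.αv i) x • D.α i

lemma sX_invol (i : I) : Function.Involutive (D.sXfun i) := by
  intro x
  have h2 : D.pairE (D.αv i) (D.α i) = 2 := by rw [D.pair_av_a, D.A_diag]
  show (x - D.pairE (D.αv i) x • D.α i) -
      D.pairE (D.αv i) (x - D.pairE (D.αv i) x • D.α i) • D.α i = x
  rw [map_sub, map_zsmul, h2, smul_eq_mul]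
  have h : D.pairE (D.αv i) x - D.pairE (D.αv i) x * 2 = -(D.pairE (D.αv i) x) := by ring
  rw [h, neg_smul]
  abel

/-- The simple reflection `s_i : x ↦ x - ⟨αv i, x⟩ • α i` as an automorphism of `X`. -/
def sX (i : I) : AddAut X :=
  AddEquiv.mk' (D.sX_invol i).toPerm (by
    intro x y
    show ((x + y) - D.pairE (D.αv i) (x + y) • D.α i)
        = (x - D.pairE (D.αv i) x • D.α i) + (y - D.pairE (D.αv i) y • D.α i)
    rw [map_add, add_smul]
    abel)

/-- The vectorial Weyl group `Wᵛ`, as the subgroup of `AddAut X` generated by the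
simple reflections. -/
def Wg : Subgroup (AddAut X) := Subgroup.closure (Set.range D.sX)

/-- The contragredient action of an automorphism `f` of `X` on `Y`; it is characterized by
`⟨actY f y, x⟩ = ⟨y, f⁻¹ x⟩`. -/
def actY (f : AddAut X) (y : Y) : Y :=
  D.pairE.symm ((D.pairE y).comp (AddEquiv.toAddMonoidHom (AddEquiv.symm f)))

/-- The set of real roots `Φ = Wᵛ · {α i}`. -/
def Phi : Set X := {x | ∃ p : AddAut X × I, p.1 ∈ D.Wg ∧ x = p.1 (D.α p.2)}

/-- The set of positive real roots `Φ₊`. -/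
def PhiPos : Set X := {x | x ∈ D.Phi ∧ ∃ c : I → ℕ, x = ∑ i, (c i : ℤ) • D.α i}

/-- The set of negative real roots `Φ₋ = -Φ₊`. -/
def PhiNeg : Set X := {x | -x ∈ D.PhiPos}

/-- The coroot `β^∨` of a real root `β`: if `β = w (α i)` then `β^∨ = w (αv i)`
(this is independent of the chosen expression). -/
noncomputable def coroot (x : X) : Y :=
  if h : ∃ p : AddAut X × I, p.1 ∈ D.Wg ∧ x = p.1 (D.α p.2) then
    D.actY h.choose.1 (D.αv h.choose.2)
  else 0

/-- The reflection `s_β` associated to a real root `β`: if `β = w (α i)` then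
`s_β = w s_i w⁻¹` (independent of the chosen expression). -/
noncomputable def srefl (x : X) : AddAut X :=
  if h : ∃ p : AddAut X × I, p.1 ∈ D.Wg ∧ x = p.1 (D.α p.2) then
    h.choose.1 * D.sX h.choose.2 * h.choose.1⁻¹
  else 1

/-- The integral fundamental chamber `Y^{++}` of dominant coweights. -/
def Ypp : Set Y := {y | ∀ i, 0 ≤ D.pr y (D.α i)}

/-- The integral Tits cone `Y⁺ = Wᵛ · Y^{++}`. -/
def Yplus : Set Y := {y | ∃ p : AddAut X × Y, p.1 ∈ D.Wg ∧ p.2 ∈ D.Ypp ∧ y = D.actY p.1 p.2}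

/-- The dominant representative `λ^{++}` of `λ ∈ Y⁺` (the unique dominant element of the
orbit `Wᵛ · λ`). -/
noncomputable def dompp (y : Y) : Y :=
  if h : ∃ p : AddAut X × Y, p.1 ∈ D.Wg ∧ p.2 ∈ D.Ypp ∧ y = D.actY p.1 p.2 then
    h.choose.2
  else y

/-- The inversion set `Inv(w) = {α ∈ Φ₊ | w α ∈ Φ₋}`. -/
def invSet (w : AddAut X) : Set X := {a | a ∈ D.PhiPos ∧ w a ∈ D.PhiNeg}

/-- The Bruhat length `ℓ(w) = |Inv(w)|`. -/
noncomputable def len (w : AddAut X) : ℕ := (D.invSet w).ncard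

/-- The relative length `ℓ_v(w) = |Inv(w⁻¹)∖Inv(v⁻¹)| − |Inv(w⁻¹)∩Inv(v⁻¹)|`. -/
noncomputable def rlen (v w : AddAut X) : ℤ :=
  ((D.invSet w⁻¹ \ D.invSet v⁻¹).ncard : ℤ) - ((D.invSet w⁻¹ ∩ D.invSet v⁻¹).ncard : ℤ)

/-- `v^λ`: the minimal-length element of `Wᵛ` sending `λ^{++}` to `λ`. -/
noncomputable def vmin (l : Y) : AddAut X :=
  if h : ∃ w : AddAut X, w ∈ D.Wg ∧ D.actY w (D.dompp l) = l ∧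
      ∀ w' : AddAut X, w' ∈ D.Wg → D.actY w' (D.dompp l) = l → D.len w ≤ D.len w'
  then h.choose else 1

/-- The set of reflections of `Wᵛ`. -/
def reflections : Set (AddAut X) := {r | ∃ b ∈ D.PhiPos, r = D.srefl b}

/-- One step of the Bruhat order on `Wᵛ`. -/
def vectStep (u u' : AddAut X) : Prop :=
  ∃ r ∈ D.reflections, u' = u * r ∧ D.len u < D.len u'

/-- The Bruhat order on `Wᵛ`. -/
def vlt : AddAut X → AddAut X → Prop := Relation.TransGen D.vectStep

/-- One step of the relative Bruhat order `<_v` on `Wᵛ`. -/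
def rvStep (v u u' : AddAut X) : Prop :=
  ∃ r ∈ D.reflections, u' = u * r ∧ D.rlen v u < D.rlen v u'

/-- The relative Bruhat order `<_v` on `Wᵛ`. -/
def rvlt (v : AddAut X) : AddAut X → AddAut X → Prop := Relation.TransGen (D.rvStep v)

/-- The stabilizer `W_λ` of `λ` in `Wᵛ`. -/
def Wstab (l : Y) : Set (AddAut X) := {u | u ∈ D.Wg ∧ D.actY u l = l}

/-- `v` is the minimal-length representative of its coset `v W_λ`. -/
def IsMinRep (l : Y) (v : AddAut X) : Prop :=
  v ∈ D.Wg ∧ ∀ u ∈ D.Wstab l, D.len v ≤ D.len (v * u)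

/-- The action of `π^λ w ∈ Y ⋊ Wᵛ` on affine roots:
`π^λ w (β + nπ) = w β + (n + ⟨λ, w β⟩)π`. -/
def affAct (a : Y × AddAut X) (r : X × ℤ) : X × ℤ :=
  (a.2 r.1, r.2 + D.pr a.1 (a.2 r.1))

/-- The set `Φᵃ₊` of positive affine roots. -/
def PhiAffPos : Set (X × ℤ) :=
  {r | r.1 ∈ D.Phi ∧ (0 < r.2 ∨ (r.2 = 0 ∧ r.1 ∈ D.PhiPos))}

/-- The affine root `β[n] = sgn(n)β + |n|π`. -/
def aroot (b : X) (n : ℤ) : X × ℤ := (isgn n • b, |n|)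

/-- The affine reflection `s_{β[n]} = π^{nβ^∨} s_β`, as an element of `Y ⋊ Wᵛ`. -/
noncomputable def saff (b : X) (n : ℤ) : Y × AddAut X := (n • D.coroot b, D.srefl b)

/-- Multiplication in the semidirect product `Y ⋊ Wᵛ`:
`π^λ w · π^μ v = π^{λ + w μ} (w v)`. -/
def mulA (a b : Y × AddAut X) : Y × AddAut X := (a.1 + D.actY a.2 b.1, a.2 * b.2)

/-- One step `x < x·s_{β[n]}` of the affine Bruhat order on `W⁺`, for `β ∈ Φ₊`, `n ∈ ℤ`,
requiring both elements to lie in `W⁺` and `x(β[n]) ∈ Φᵃ₊`. -/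
def astep (a b : Y × AddAut X) : Prop :=
  a.1 ∈ D.Yplus ∧ b.1 ∈ D.Yplus ∧ a.2 ∈ D.Wg ∧ b.2 ∈ D.Wg ∧
    ∃ g ∈ D.PhiPos, ∃ m : ℤ,
      D.affAct a (aroot (X := X) g m) ∈ D.PhiAffPos ∧ b = D.mulA a (D.saff g m)

/-- The (strict) affine Bruhat order on `W⁺`. -/
def alt : (Y × AddAut X) → (Y × AddAut X) → Prop := Relation.TransGen D.astep

/-- The affine Bruhat order on `W⁺`. -/
def ale (a b : Y × AddAut X) : Prop := a = b ∨ D.alt a b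

/-- `b` covers `a` for the affine Bruhat order: `a < b` and nothing lies strictly
between them. -/
def acovers (a b : Y × AddAut X) : Prop :=
  D.alt a b ∧ ∀ c, D.alt a c → D.alt c b → False

/-- `Λ` is a family of fundamental weights: `⟨αv i, Λ j⟩ = δ_{ij}`. -/
def IsFundWeights (Λ : I → X) : Prop :=
  ∀ i j, D.pr (D.αv i) (Λ j) = if i = j then 1 else 0

/-- The height `ht(λ) = ⟨λ, ρ⟩` where `ρ = Σ_i Λ_i`. -/
def ht (Λ : I → X) (l : Y) : ℤ := D.pr l (∑ i, Λ i)

/-- The affine length `ℓᵃ` with integral values. -/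
noncomputable def alen (Λ : I → X) (a : Y × AddAut X) : ℤ :=
  2 * D.ht Λ (D.dompp a.1) +
    ((({x | x ∈ D.invSet a.2⁻¹ ∧ 0 ≤ D.pr a.1 x}).ncard : ℤ) -
      (({x | x ∈ D.invSet a.2⁻¹ ∧ D.pr a.1 x < 0}).ncard : ℤ))

end KM

namespace KMAux

/-! Generic word-length machinery for a family of generators in a group. -/

variable {G : Type*} [Group G] {γ : Type*} (gen : γ → G)

def wprod (l : List γ) : G := (l.map gen).prod

@[simp] lemma wprod_nil : wprod gen ([] : List γ) = 1 := rfl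

@[simp] lemma wprod_cons (u : γ) (l : List γ) :
    wprod gen (u :: l) = gen u * wprod gen l := by
  simp [wprod]

lemma wprod_append (l₁ l₂ : List γ) :
    wprod gen (l₁ ++ l₂) = wprod gen l₁ * wprod gen l₂ := by
  simp [wprod]

def inW (w : G) : Prop := ∃ l : List γ, wprod gen l = w

lemma inW_one : inW gen (1 : G) := ⟨[], rfl⟩

lemma inW_gen (u : γ) : inW gen (gen u) := ⟨[u], by simp⟩

lemma inW_mul {w w' : G} (h : inW gen w) (h' : inW gen w') : inW gen (w * w') := by
  obtain ⟨l, rfl⟩ := h; obtain ⟨l', rfl⟩ := h'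
  exact ⟨l ++ l', wprod_append gen l l'⟩

noncomputable def wlen (w : G) : ℕ := sInf {n | ∃ l : List γ, wprod gen l = w ∧ l.length = n}

lemma wlen_le {w : G} (l : List γ) (hl : wprod gen l = w) : wlen gen w ≤ l.length :=
  Nat.sInf_le ⟨l, hl, rfl⟩

lemma exists_min_word {w : G} (h : inW gen w) :
    ∃ l : List γ, wprod gen l = w ∧ l.length = wlen gen w := by
  obtain ⟨l, hl⟩ := h
  have hne : {n | ∃ l : List γ, wprod gen l = w ∧ l.length = n}.Nonempty := ⟨l.length, l, hl, rfl⟩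
  exact Nat.sInf_mem hne

@[simp] lemma wlen_one : wlen gen (1 : G) = 0 :=
  Nat.le_zero.mp (wlen_le gen [] rfl)

lemma eq_one_of_wlen_eq_zero {w : G} (h : inW gen w) (h0 : wlen gen w = 0) : w = 1 := by
  obtain ⟨l, hl, hlen⟩ := exists_min_word gen h
  rw [h0] at hlen
  rw [List.length_eq_zero_iff.mp hlen] at hl
  exact hl.symm.trans rfl

lemma wlen_mul_le {w w' : G} (h : inW gen w) (h' : inW gen w') :
    wlen gen (w * w') ≤ wlen gen w + wlen gen w' := by
  obtain ⟨l, hl, hlen⟩ := exists_min_word gen h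
  obtain ⟨l', hl', hlen'⟩ := exists_min_word gen h'
  have := wlen_le gen (l ++ l') (by rw [wprod_append, hl, hl'])
  simpa [hlen, hlen'] using this

lemma wlen_mul_gen_le {w : G} (h : inW gen w) (u : γ) :
    wlen gen (w * gen u) ≤ wlen gen w + 1 :=
  le_trans (wlen_mul_le gen h (inW_gen gen u)) (by
    have : wlen gen (gen u) ≤ 1 := wlen_le gen [u] (by simp)
    omega)

lemma wlen_gen_mul_le {w : G} (h : inW gen w) (u : γ) :
    wlen gen (gen u * w) ≤ 1 + wlen gen w :=
  le_trans (wlen_mul_le gen (inW_gen gen u) h) (by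
    have : wlen gen (gen u) ≤ 1 := wlen_le gen [u] (by simp)
    omega)

/-- Transport of word length along a map of generator alphabets. -/
lemma wlen_comp_le {γ' : Type*} (gen' : γ' → G) (e : γ → γ') (he : ∀ u, gen' (e u) = gen u)
    {w : G} (h : inW gen w) : wlen gen' w ≤ wlen gen w := by
  obtain ⟨l, hl, hlen⟩ := exists_min_word gen h
  have : wprod gen' (l.map e) = w := by
    rw [← hl]; unfold wprod
    rw [List.map_map]
    congr 1
    exact List.map_congr_left (fun u _ => by simp [he u])
  have := wlen_le gen' (l.map e) this
  simpa [hlen] using this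

lemma inW_comp {γ' : Type*} (gen' : γ' → G) (e : γ → γ') (he : ∀ u, gen' (e u) = gen u)
    {w : G} (h : inW gen w) : inW gen' w := by
  obtain ⟨l, hl⟩ := h
  refine ⟨l.map e, ?_⟩
  rw [← hl]; unfold wprod
  rw [List.map_map]
  congr 1
  exact List.map_congr_left (fun u _ => by simp [he u])

lemma wprod_concat (l : List γ) (u : γ) :
    wprod gen (l ++ [u]) = wprod gen l * gen u := by
  rw [wprod_append]; simp

end KMAux
namespace KM

open KMAux

variable {I X Y : Type*} [Fintype I] [AddCommGroup X] [AddCommGroup Y] (D : KM I X Y)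

open scoped Classical

/-! ### Basic lemmas -/

lemma sX_apply (i : I) (x : X) : D.sX i x = x - D.pr (D.αv i) x • D.α i := rfl

lemma pr_alpha (i j : I) : D.pr (D.αv i) (D.α j) = D.A i j := D.pair_av_a i j

lemma pr_add (y : Y) (x x' : X) : D.pr y (x + x') = D.pr y x + D.pr y x' := by
  unfold pr; simp

lemma pr_zsmul (y : Y) (n : ℤ) (x : X) : D.pr y (n • x) = n * D.pr y x := by
  unfold pr; simp

lemma pr_neg (y : Y) (x : X) : D.pr y (-x) = - D.pr y x := by
  unfold pr; simp

lemma sX_alpha_self (i : I) : D.sX i (D.α i) = - D.α i := by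
  rw [sX_apply, pr_alpha, D.A_diag]
  rw [show ((2 : ℤ) • D.α i) = D.α i + D.α i from two_zsmul _]
  abel

lemma sX_mul_self (i : I) : D.sX i * D.sX i = 1 := by
  ext x
  exact D.sX_invol i x

lemma sX_inv (i : I) : (D.sX i)⁻¹ = D.sX i := by
  rw [eq_comm, eq_inv_iff_mul_eq_one]
  exact D.sX_mul_self i

lemma wprod_sX_reverse (l : List I) : wprod D.sX l.reverse = (wprod D.sX l)⁻¹ := by
  induction l with
  | nil => simp
  | cons u t ih =>
      rw [List.reverse_cons, wprod_concat, ih, wprod_cons, mul_inv_rev, D.sX_inv u]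

lemma mem_Wg_iff {w : AddAut X} : w ∈ D.Wg ↔ inW D.sX w := by
  constructor
  · intro h
    refine Subgroup.closure_induction ?_ ?_ ?_ ?_ h
    · rintro x ⟨i, rfl⟩; exact inW_gen _ i
    · exact inW_one _
    · intro x y _ _ hx hy; exact inW_mul _ hx hy
    · rintro x _ ⟨l, rfl⟩
      exact ⟨l.reverse, D.wprod_sX_reverse l⟩
  · rintro ⟨l, rfl⟩
    induction l with
    | nil => exact Subgroup.one_mem _
    | cons u t ih =>
        rw [wprod_cons]
        exact Subgroup.mul_mem _ (Subgroup.subset_closure ⟨u, rfl⟩) ih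

lemma coeff_eq_zero {e : I → ℤ} (h : ∑ i, e i • D.α i = 0) : ∀ i, e i = 0 :=
  Fintype.linearIndependent_iff.mp D.indep_α e h

lemma alpha_ne_zero (i : I) : D.α i ≠ 0 := D.indep_α.ne_zero i

lemma zsmul_alpha_eq_zero {i : I} {n : ℤ} (h : n • D.α i = 0) : n = 0 := by
  have := D.coeff_eq_zero (e := fun j => if j = i then n else 0) ?_ i
  · simpa using this
  · simp only [ite_smul, zero_smul, Finset.sum_ite_eq', Finset.mem_univ, if_true]
    exact h

/-! ### Roots: basic positivity structure -/

/-- The `ℕ`-span of the simple roots. -/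
def Pos : Set X := {x | ∃ c : I → ℕ, x = ∑ i, (c i : ℤ) • D.α i}

lemma phiPos_iff {x : X} : x ∈ D.PhiPos ↔ x ∈ D.Phi ∧ x ∈ D.Pos := Iff.rfl

lemma mem_Phi {w : AddAut X} (hw : w ∈ D.Wg) (j : I) : w (D.α j) ∈ D.Phi :=
  ⟨(w, j), hw, rfl⟩

lemma Phi_invariant {w : AddAut X} (hw : w ∈ D.Wg) {x : X} (hx : x ∈ D.Phi) :
    w x ∈ D.Phi := by
  obtain ⟨⟨u, j⟩, hu, rfl⟩ := hx
  exact ⟨(w * u, j), D.Wg.mul_mem hw hu, rfl⟩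

lemma alpha_mem_Phi (i : I) : D.α i ∈ D.Phi := ⟨(1, i), Subgroup.one_mem _, rfl⟩

lemma alpha_mem_Pos (i : I) : D.α i ∈ D.Pos := by
  refine ⟨fun j => if j = i then 1 else 0, ?_⟩
  simp only [Int.ofNat_zero]
  rw [eq_comm, Finset.sum_eq_single i] <;> simp_all

lemma alpha_mem_PhiPos (i : I) : D.α i ∈ D.PhiPos := ⟨D.alpha_mem_Phi i, D.alpha_mem_Pos i⟩

lemma zero_not_mem_Phi : (0 : X) ∉ D.Phi := by
  rintro ⟨⟨u, j⟩, hu, hj⟩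
  apply D.alpha_ne_zero j
  have := congrArg u.symm hj
  simpa using this.symm

lemma Pos_add {x y : X} (hx : x ∈ D.Pos) (hy : y ∈ D.Pos) : x + y ∈ D.Pos := by
  obtain ⟨c, rfl⟩ := hx; obtain ⟨d, rfl⟩ := hy
  refine ⟨fun i => c i + d i, ?_⟩
  rw [← Finset.sum_add_distrib]
  congr 1; funext i
  push_cast
  rw [add_smul]

lemma Pos_nsmul (n : ℕ) {x : X} (hx : x ∈ D.Pos) : (n : ℤ) • x ∈ D.Pos := by
  obtain ⟨c, rfl⟩ := hx
  refine ⟨fun i => n * c i, ?_⟩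
  rw [Finset.smul_sum]
  congr 1; funext i
  rw [smul_smul]
  push_cast
  ring_nf

lemma eq_zero_of_pos_neg {x : X} (hx : x ∈ D.Pos) (hx' : -x ∈ D.Pos) : x = 0 := by
  obtain ⟨c, hc⟩ := hx; obtain ⟨d, hd⟩ := hx'
  have hsum : ∑ i, ((c i : ℤ) + (d i : ℤ)) • D.α i = 0 := by
    have : ∑ i, ((c i : ℤ) • D.α i + (d i : ℤ) • D.α i) = x + -x := by
      rw [Finset.sum_add_distrib, ← hc, ← hd]
    simp only [add_smul]
    rw [this]; abel
  have hz := D.coeff_eq_zero hsum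
  have : ∀ i, (c i : ℤ) = 0 := fun i => by have := hz i; omega
  rw [hc]
  exact Finset.sum_eq_zero fun i _ => by rw [this i, zero_smul]

lemma not_pos_and_neg {x : X} (hx : x ∈ D.PhiPos) (hx' : x ∈ D.PhiNeg) : False := by
  have h0 : x = 0 := D.eq_zero_of_pos_neg hx.2 hx'.2
  exact D.zero_not_mem_Phi (h0 ▸ hx.1)

lemma phiNeg_iff {x : X} : x ∈ D.PhiNeg ↔ -x ∈ D.PhiPos := Iff.rfl

lemma neg_alpha_not_PhiPos (i : I) : - D.α i ∉ D.PhiPos := fun hp =>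
  D.not_pos_and_neg (D.alpha_mem_PhiPos i) (by rw [phiNeg_iff]; simpa using hp)

/-! ### Dihedral (rank 2) machinery -/

lemma mul_apply' (f g : AddAut X) (x : X) : (f * g) x = f (g x) := rfl

lemma pr_sub (y : Y) (x x' : X) : D.pr y (x - x') = D.pr y x - D.pr y x' := by
  unfold pr; simp

lemma sX_alpha (i i' : I) : D.sX i (D.α i') = D.α i' - (D.A i i') • D.α i := by
  rw [sX_apply, pr_alpha]

lemma map_comb (u : AddAut X) (p q : ℤ) (x y : X) :
    u (p • x + q • y) = p • u x + q • u y := by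
  simp

/-- Generators of the dihedral subgroup generated by `s_j` and `s_k`. -/
def gjk (j k : I) : Bool → AddAut X := fun b => if b then D.sX j else D.sX k

@[simp] lemma gjk_true (j k : I) : D.gjk j k true = D.sX j := rfl
@[simp] lemma gjk_false (j k : I) : D.gjk j k false = D.sX k := rfl

lemma gjk_invol (j k : I) (b : Bool) : D.gjk j k b * D.gjk j k b = 1 := by
  cases b <;> exact D.sX_mul_self _

lemma gjk_swap (j k : I) (b : Bool) : D.gjk k j (!b) = D.gjk j k b := by
  cases b <;> rfl

/-- The letter at position `r` (from the right) of the alternating word ending in `s_k`. -/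
def ltrB (r : ℕ) : Bool := decide (r % 2 = 0)

/-- The alternating word `… s_j s_k s_j s_k` of length `r` (as a list, leftmost letter first). -/
def sufWd : ℕ → List Bool
  | 0 => []
  | r + 1 => ltrB (r + 1) :: sufWd r

@[simp] lemma sufWd_length (r : ℕ) : (sufWd r).length = r := by
  induction r with
  | zero => rfl
  | succ r ih => simp [sufWd, ih]

/-- The alternating product `… s_j s_k s_j s_k` of length `r`. -/
def suf2 (j k : I) (r : ℕ) : AddAut X := KMAux.wprod (D.gjk j k) (sufWd r)

lemma suf2_zero (j k : I) : D.suf2 j k 0 = 1 := rfl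

lemma suf2_succ (j k : I) (r : ℕ) :
    D.suf2 j k (r + 1) = D.gjk j k (ltrB (r + 1)) * D.suf2 j k r :=
  KMAux.wprod_cons _ _ _

lemma suf2_one (j k : I) : D.suf2 j k 1 = D.sX k := by
  rw [suf2_succ, suf2_zero, mul_one]
  rfl

lemma len2_suf2_le (j k : I) (r : ℕ) : KMAux.wlen (D.gjk j k) (D.suf2 j k r) ≤ r := by
  have := KMAux.wlen_le (D.gjk j k) (sufWd r) rfl
  simpa [suf2] using this

lemma inW_suf2 (j k : I) (r : ℕ) : KMAux.inW (D.gjk j k) (D.suf2 j k r) := ⟨sufWd r, rfl⟩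

/-- Coefficients of the image of `α j` under the alternating products. -/
def PQ (j k : I) : ℕ → ℤ × ℤ
  | 0 => (1, 0)
  | r + 1 =>
      if r % 2 = 0 then ((PQ j k r).1, -(D.A k j) * (PQ j k r).1 - (PQ j k r).2)
      else (-(PQ j k r).1 - D.A j k * (PQ j k r).2, (PQ j k r).2)

lemma PQ_succ (j k : I) (r : ℕ) :
    D.PQ j k (r + 1) =
      if r % 2 = 0 then ((D.PQ j k r).1, -(D.A k j) * (D.PQ j k r).1 - (D.PQ j k r).2)
      else (-(D.PQ j k r).1 - D.A j k * (D.PQ j k r).2, (D.PQ j k r).2) := by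
  rw [PQ]

lemma suf2_alpha (j k : I) (r : ℕ) :
    D.suf2 j k r (D.α j) = (D.PQ j k r).1 • D.α j + (D.PQ j k r).2 • D.α k := by
  induction r with
  | zero => simp [suf2_zero, PQ]; rfl
  | succ r ih =>
      rw [suf2_succ, mul_apply', ih, map_comb]
      by_cases hr : r % 2 = 0
      · have hl : ltrB (r + 1) = false := by simp [ltrB]; omega
        rw [hl, gjk_false, D.sX_alpha k j, D.sX_alpha k k, D.A_diag k]
        show _ = (D.PQ j k (r+1)).1 • D.α j + (D.PQ j k (r+1)).2 • D.α k
        rw [show D.PQ j k (r+1) = ((D.PQ j k r).1, -(D.A k j) * (D.PQ j k r).1 - (D.PQ j k r).2) by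
          rw [D.PQ_succ, if_pos hr]]
        module
      · have hl : ltrB (r + 1) = true := by simp [ltrB]; omega
        rw [hl, gjk_true, D.sX_alpha j j, D.sX_alpha j k, D.A_diag j]
        show _ = (D.PQ j k (r+1)).1 • D.α j + (D.PQ j k (r+1)).2 • D.α k
        rw [show D.PQ j k (r+1) = (-(D.PQ j k r).1 - D.A j k * (D.PQ j k r).2, (D.PQ j k r).2) by
          rw [D.PQ_succ, if_neg hr]]
        module

lemma suf2_two (j k : I) : D.suf2 j k 2 = D.sX j * D.sX k := by
  rw [suf2_succ, suf2_one]; rfl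

lemma suf2_three (j k : I) : D.suf2 j k 3 = D.sX k * (D.sX j * D.sX k) := by
  rw [suf2_succ, suf2_two]; rfl

lemma suf2_four (j k : I) : D.suf2 j k 4 = D.sX j * (D.sX k * (D.sX j * D.sX k)) := by
  rw [suf2_succ, suf2_three]; rfl

lemma suf2_five (j k : I) : D.suf2 j k 5 = D.sX k * (D.sX j * (D.sX k * (D.sX j * D.sX k))) := by
  rw [suf2_succ, suf2_four]; rfl

lemma suf2_six (j k : I) :
    D.suf2 j k 6 = D.sX j * (D.sX k * (D.sX j * (D.sX k * (D.sX j * D.sX k)))) := by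
  rw [suf2_succ, suf2_five]; rfl

lemma braid_c0 {j k : I} (h1 : D.A j k = 0) (h2 : D.A k j = 0) :
    D.suf2 j k 2 * D.sX j = D.suf2 j k 1 := by
  rw [suf2_two, suf2_one]
  ext v
  simp only [mul_apply', sX_apply, pr_sub, pr_zsmul, pr_alpha, D.A_diag, h1, h2]
  module

lemma braid_c1 {j k : I} (h1 : D.A j k = -1) (h2 : D.A k j = -1) :
    D.suf2 j k 3 * D.sX j = D.suf2 j k 2 := by
  rw [suf2_three, suf2_two]
  ext v
  simp only [mul_apply', sX_apply, pr_sub, pr_zsmul, pr_alpha, D.A_diag, h1, h2]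
  module

lemma braid_c2 {j k : I} (h1 : D.A j k * D.A k j = 2)
    (ha : D.A j k ≤ 0) (hb : D.A k j ≤ 0) :
    D.suf2 j k 4 * D.sX j = D.suf2 j k 3 := by
  have hcase : (D.A j k = -1 ∧ D.A k j = -2) ∨ (D.A j k = -2 ∧ D.A k j = -1) := by
    set p := -D.A j k with hp
    set q := -D.A k j with hq
    have hpq : p * q = 2 := by rw [hp, hq, neg_mul_neg]; exact h1
    have hp1 : 1 ≤ p := by
      have : p ≠ 0 := by intro h0; rw [h0] at hpq; simp at hpq
      omega
    have hq1 : 1 ≤ q := by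
      have : q ≠ 0 := by intro h0; rw [h0] at hpq; simp at hpq
      omega
    have hp2 : p ≤ 2 := by nlinarith
    interval_cases p <;> omega
  rw [suf2_four, suf2_three]
  rcases hcase with ⟨h1', h2'⟩ | ⟨h1', h2'⟩ <;>
  · ext v
    simp only [mul_apply', sX_apply, pr_sub, pr_zsmul, pr_alpha, D.A_diag, h1', h2']
    module

lemma braid_c3 {j k : I} (h1 : D.A j k * D.A k j = 3)
    (ha : D.A j k ≤ 0) (hb : D.A k j ≤ 0) :
    D.suf2 j k 6 * D.sX j = D.suf2 j k 5 := by
  have hcase : (D.A j k = -1 ∧ D.A k j = -3) ∨ (D.A j k = -3 ∧ D.A k j = -1) := by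
    set p := -D.A j k with hp
    set q := -D.A k j with hq
    have hpq : p * q = 3 := by rw [hp, hq, neg_mul_neg]; exact h1
    have hp1 : 1 ≤ p := by
      have : p ≠ 0 := by intro h0; rw [h0] at hpq; simp at hpq
      omega
    have hq1 : 1 ≤ q := by
      have : q ≠ 0 := by intro h0; rw [h0] at hpq; simp at hpq
      omega
    have hp2 : p ≤ 3 := by nlinarith
    interval_cases p <;> omega
  rw [suf2_six, suf2_five]
  rcases hcase with ⟨h1', h2'⟩ | ⟨h1', h2'⟩ <;>
  · ext v
    simp only [mul_apply', sX_apply, pr_sub, pr_zsmul, pr_alpha, D.A_diag, h1', h2']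
    module


lemma PQpos_c0 {j k : I} (h1 : D.A j k = 0) (h2 : D.A k j = 0) :
    ∀ r, r ≤ 1 → 0 ≤ (D.PQ j k r).1 ∧ 0 ≤ (D.PQ j k r).2 := by
  have e0 : D.PQ j k 0 = (1, 0) := by rw [PQ]
  have e1 : D.PQ j k 1 = (1, 0) := by
    rw [show (1:ℕ) = 0+1 from rfl, PQ_succ, e0, h1, h2]; norm_num
  intro r hr
  interval_cases r <;> simp [e0, e1]

lemma PQpos_c1 {j k : I} (h1 : D.A j k = -1) (h2 : D.A k j = -1) :
    ∀ r, r ≤ 2 → 0 ≤ (D.PQ j k r).1 ∧ 0 ≤ (D.PQ j k r).2 := by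
  have e0 : D.PQ j k 0 = (1, 0) := by rw [PQ]
  have e1 : D.PQ j k 1 = (1, 1) := by
    rw [show (1:ℕ) = 0+1 from rfl, PQ_succ, e0, h1, h2]; norm_num
  have e2 : D.PQ j k 2 = (0, 1) := by
    rw [show (2:ℕ) = 1+1 from rfl, PQ_succ, e1, h1, h2]; norm_num
  intro r hr
  interval_cases r <;> simp [e0, e1, e2]

lemma PQpos_c2a {j k : I} (h1 : D.A j k = -1) (h2 : D.A k j = -2) :
    ∀ r, r ≤ 3 → 0 ≤ (D.PQ j k r).1 ∧ 0 ≤ (D.PQ j k r).2 := by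
  have e0 : D.PQ j k 0 = (1, 0) := by rw [PQ]
  have e1 : D.PQ j k 1 = (1, 2) := by
    rw [show (1:ℕ) = 0+1 from rfl, PQ_succ, e0, h1, h2]; norm_num
  have e2 : D.PQ j k 2 = (1, 2) := by
    rw [show (2:ℕ) = 1+1 from rfl, PQ_succ, e1, h1, h2]; norm_num
  have e3 : D.PQ j k 3 = (1, 0) := by
    rw [show (3:ℕ) = 2+1 from rfl, PQ_succ, e2, h1, h2]; norm_num
  intro r hr
  interval_cases r <;> simp [e0, e1, e2, e3]

lemma PQpos_c2b {j k : I} (h1 : D.A j k = -2) (h2 : D.A k j = -1) :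
    ∀ r, r ≤ 3 → 0 ≤ (D.PQ j k r).1 ∧ 0 ≤ (D.PQ j k r).2 := by
  have e0 : D.PQ j k 0 = (1, 0) := by rw [PQ]
  have e1 : D.PQ j k 1 = (1, 1) := by
    rw [show (1:ℕ) = 0+1 from rfl, PQ_succ, e0, h1, h2]; norm_num
  have e2 : D.PQ j k 2 = (1, 1) := by
    rw [show (2:ℕ) = 1+1 from rfl, PQ_succ, e1, h1, h2]; norm_num
  have e3 : D.PQ j k 3 = (1, 0) := by
    rw [show (3:ℕ) = 2+1 from rfl, PQ_succ, e2, h1, h2]; norm_num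
  intro r hr
  interval_cases r <;> simp [e0, e1, e2, e3]

lemma PQpos_c3a {j k : I} (h1 : D.A j k = -1) (h2 : D.A k j = -3) :
    ∀ r, r ≤ 5 → 0 ≤ (D.PQ j k r).1 ∧ 0 ≤ (D.PQ j k r).2 := by
  have e0 : D.PQ j k 0 = (1, 0) := by rw [PQ]
  have e1 : D.PQ j k 1 = (1, 3) := by
    rw [show (1:ℕ) = 0+1 from rfl, PQ_succ, e0, h1, h2]; norm_num
  have e2 : D.PQ j k 2 = (2, 3) := by
    rw [show (2:ℕ) = 1+1 from rfl, PQ_succ, e1, h1, h2]; norm_num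
  have e3 : D.PQ j k 3 = (2, 3) := by
    rw [show (3:ℕ) = 2+1 from rfl, PQ_succ, e2, h1, h2]; norm_num
  have e4 : D.PQ j k 4 = (1, 3) := by
    rw [show (4:ℕ) = 3+1 from rfl, PQ_succ, e3, h1, h2]; norm_num
  have e5 : D.PQ j k 5 = (1, 0) := by
    rw [show (5:ℕ) = 4+1 from rfl, PQ_succ, e4, h1, h2]; norm_num
  intro r hr
  interval_cases r <;> simp [e0, e1, e2, e3, e4, e5]

lemma PQpos_c3b {j k : I} (h1 : D.A j k = -3) (h2 : D.A k j = -1) :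
    ∀ r, r ≤ 5 → 0 ≤ (D.PQ j k r).1 ∧ 0 ≤ (D.PQ j k r).2 := by
  have e0 : D.PQ j k 0 = (1, 0) := by rw [PQ]
  have e1 : D.PQ j k 1 = (1, 1) := by
    rw [show (1:ℕ) = 0+1 from rfl, PQ_succ, e0, h1, h2]; norm_num
  have e2 : D.PQ j k 2 = (2, 1) := by
    rw [show (2:ℕ) = 1+1 from rfl, PQ_succ, e1, h1, h2]; norm_num
  have e3 : D.PQ j k 3 = (2, 1) := by
    rw [show (3:ℕ) = 2+1 from rfl, PQ_succ, e2, h1, h2]; norm_num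
  have e4 : D.PQ j k 4 = (1, 1) := by
    rw [show (4:ℕ) = 3+1 from rfl, PQ_succ, e3, h1, h2]; norm_num
  have e5 : D.PQ j k 5 = (1, 0) := by
    rw [show (5:ℕ) = 4+1 from rfl, PQ_succ, e4, h1, h2]; norm_num
  intro r hr
  interval_cases r <;> simp [e0, e1, e2, e3, e4, e5]

lemma PQpos_big {j k : I} (hjk : j ≠ k) (h4 : 4 ≤ D.A j k * D.A k j) :
    ∀ r, 0 ≤ (D.PQ j k r).1 ∧ 0 ≤ (D.PQ j k r).2 := by
  have ha : D.A j k ≤ 0 := D.A_offdiag j k hjk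
  have hb : D.A k j ≤ 0 := D.A_offdiag k j hjk.symm
  have e0 : D.PQ j k 0 = (1, 0) := by rw [PQ]
  have e1 : D.PQ j k 1 = (1, -D.A k j) := by
    rw [show (1:ℕ) = 0+1 from rfl, PQ_succ, e0]; norm_num
  have inv : ∀ m : ℕ, ∃ u v : ℤ, D.PQ j k (2*m+1) = (u, -D.A k j * v) ∧
      1 ≤ u ∧ 1 ≤ v ∧ u ≤ (D.A j k * D.A k j - 2) * v := by
    intro m
    induction m with
    | zero =>
        refine ⟨1, 1, ?_, le_refl _, le_refl _, by nlinarith⟩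
        rw [show 2*0+1 = 1 from rfl, e1]; norm_num
    | succ m ih =>
        obtain ⟨u, v, hPQ, hu, hv, huv⟩ := ih
        have h2m2 : D.PQ j k (2*m+2) = (-u - D.A j k * (-D.A k j * v), -D.A k j * v) := by
          rw [show 2*m+2 = (2*m+1)+1 from rfl, PQ_succ, hPQ, if_neg (by omega)]
        have h2m3 : D.PQ j k (2*m+3) =
            (-u - D.A j k * (-D.A k j * v),
             -D.A k j * (-u - D.A j k * (-D.A k j * v)) - -D.A k j * v) := by
          rw [show 2*m+3 = (2*m+2)+1 from rfl, PQ_succ, h2m2, if_pos (by omega)]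
        refine ⟨-u - D.A j k * (-D.A k j * v), (-u - D.A j k * (-D.A k j * v)) - v, ?_, ?_, ?_, ?_⟩
        · rw [show 2*(m+1)+1 = 2*m+3 from by ring, h2m3]
          simp only [Prod.mk.injEq]
          exact ⟨trivial, by ring⟩
        · nlinarith
        · nlinarith
        · nlinarith [mul_le_mul_of_nonneg_left huv
            (show (0:ℤ) ≤ D.A j k * D.A k j - 3 by nlinarith), hv,
            mul_nonneg (mul_nonneg (neg_nonneg.mpr ha) (neg_nonneg.mpr hb)) (by linarith : (0:ℤ) ≤ v)]
  intro r
  match r with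
  | 0 => rw [e0]; norm_num
  | (r' + 1) =>
      rcases Nat.even_or_odd r' with ⟨m, hm⟩ | ⟨m, hm⟩
      · -- r = 2m+1
        obtain ⟨u, v, hPQ, hu, hv, huv⟩ := inv m
        rw [show r' + 1 = 2*m+1 from by omega, hPQ]
        constructor
        · simp; omega
        · simp; nlinarith
      · -- r = 2m+2
        obtain ⟨u, v, hPQ, hu, hv, huv⟩ := inv m
        have h2m2 : D.PQ j k (2*m+2) = (-u - D.A j k * (-D.A k j * v), -D.A k j * v) := by
          rw [show 2*m+2 = (2*m+1)+1 from rfl, PQ_succ, hPQ, if_neg (by omega)]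
        rw [show r' + 1 = 2*m+2 from by omega, h2m2]
        constructor
        · simp; nlinarith
        · simp; nlinarith

lemma inW_swap (j k : I) {x : AddAut X} (hx : KMAux.inW (D.gjk j k) x) :
    KMAux.inW (D.gjk k j) x :=
  KMAux.inW_comp _ (D.gjk k j) Bool.not (fun u => D.gjk_swap j k u) hx

lemma len2_swap (j k : I) {x : AddAut X} (hx : KMAux.inW (D.gjk j k) x) :
    KMAux.wlen (D.gjk k j) x = KMAux.wlen (D.gjk j k) x := by
  refine le_antisymm (KMAux.wlen_comp_le _ (D.gjk k j) Bool.not (fun u => D.gjk_swap j k u) hx) ?_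
  exact KMAux.wlen_comp_le _ (D.gjk j k) Bool.not (fun u => D.gjk_swap k j u) (D.inW_swap j k hx)

lemma suf2_decomp (j k : I) (m : ℕ) : ∀ r, m ≤ r →
    ∃ z : AddAut X, KMAux.inW (D.gjk j k) z ∧ KMAux.wlen (D.gjk j k) z ≤ r - m ∧
      D.suf2 j k r = z * D.suf2 j k m := by
  intro r
  induction r with
  | zero =>
      intro hr
      have : m = 0 := by omega
      subst this
      exact ⟨1, KMAux.inW_one _, by simp, by rw [one_mul]⟩
  | succ r ih =>
      intro hr
      rcases Nat.eq_or_lt_of_le hr with heq | hlt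
      · exact ⟨1, KMAux.inW_one _, by simp, by rw [heq, one_mul]⟩
      · have hm : m ≤ r := by omega
        obtain ⟨z, hzW, hzl, hzeq⟩ := ih hm
        refine ⟨D.gjk j k (ltrB (r+1)) * z,
          KMAux.inW_mul _ (KMAux.inW_gen _ _) hzW, ?_, ?_⟩
        · have := KMAux.wlen_gen_mul_le (D.gjk j k) hzW (ltrB (r+1))
          omega
        · rw [suf2_succ, hzeq, mul_assoc]

/-- The rank-2 positivity statement, for all pairs of distinct indices, at a given length. -/
def Stmt (n : ℕ) : Prop := ∀ j k : I, j ≠ k → ∀ x : AddAut X, KMAux.inW (D.gjk j k) x →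
  KMAux.wlen (D.gjk j k) x = n → n ≤ KMAux.wlen (D.gjk j k) (x * D.sX j) →
  ∃ p q : ℕ, x (D.α j) = (p:ℤ) • D.α j + (q:ℤ) • D.α k

lemma comb {j k : I} {P Q : ℤ} (hP : 0 ≤ P) (hQ : 0 ≤ Q) {y1 y2 : X}
    {p1 q1 p2 q2 : ℕ} (h1 : y1 = (p1:ℤ) • D.α j + (q1:ℤ) • D.α k)
    (h2 : y2 = (p2:ℤ) • D.α k + (q2:ℤ) • D.α j) :
    ∃ p q : ℕ, P • y1 + Q • y2 = (p:ℤ) • D.α j + (q:ℤ) • D.α k := by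
  refine ⟨(P * p1 + Q * q2).toNat, (P * q1 + Q * p2).toNat, ?_⟩
  rw [Int.toNat_of_nonneg
      (add_nonneg (mul_nonneg hP (Int.natCast_nonneg _)) (mul_nonneg hQ (Int.natCast_nonneg _))),
    Int.toNat_of_nonneg
      (add_nonneg (mul_nonneg hP (Int.natCast_nonneg _)) (mul_nonneg hQ (Int.natCast_nonneg _))),
    h1, h2]
  module

lemma braid_shorten {j k : I} (m : ℕ)
    (hbm : D.suf2 j k m * D.sX j = D.suf2 j k (m-1))
    {w x : AddAut X} {mm r n : ℕ} (hwW : KMAux.inW (D.gjk j k) w)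
    (hwl : KMAux.wlen (D.gjk j k) w = mm) (hmr : mm + r = n) (hm : m ≤ r) (hm1 : 1 ≤ m)
    (hxe : x = w * D.suf2 j k r) :
    KMAux.wlen (D.gjk j k) (x * D.sX j) + 1 ≤ n := by
  obtain ⟨z, hzW, hzl, hzeq⟩ := D.suf2_decomp j k m r hm
  have hxs : x * D.sX j = (w * z) * D.suf2 j k (m-1) := by
    rw [hxe, hzeq, ← hbm]
    rw [mul_assoc, mul_assoc, mul_assoc]
  have h1 : KMAux.wlen (D.gjk j k) (x * D.sX j) ≤
      KMAux.wlen (D.gjk j k) (w * z) + KMAux.wlen (D.gjk j k) (D.suf2 j k (m-1)) := by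
    rw [hxs]
    exact KMAux.wlen_mul_le _ (KMAux.inW_mul _ hwW hzW) (D.inW_suf2 j k _)
  have h2 : KMAux.wlen (D.gjk j k) (w * z) ≤ mm + (r - m) := by
    have := KMAux.wlen_mul_le _ hwW hzW
    omega
  have h3 := D.len2_suf2_le j k (m-1)
  omega

lemma ltrB_succ_ne (r : ℕ) : ltrB (r+1) = !(ltrB r) := by
  by_cases h : r % 2 = 0
  · have h2 : ¬ ((r+1) % 2 = 0) := by omega
    simp [ltrB, h, h2]
  · have h2 : (r+1) % 2 = 0 := by omega
    simp [ltrB, h, h2]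

lemma chain {j k : I} (hjk : j ≠ k) {n : ℕ}
    (IH : ∀ n' : ℕ, n' < n → D.Stmt n')
    {x : AddAut X}
    (hxl : KMAux.wlen (D.gjk j k) x = n)
    (hxs : n ≤ KMAux.wlen (D.gjk j k) (x * D.sX j)) :
    ∀ mm : ℕ, ∀ w : AddAut X, ∀ r : ℕ, KMAux.inW (D.gjk j k) w →
      KMAux.wlen (D.gjk j k) w = mm → 1 ≤ r → mm + r = n → x = w * D.suf2 j k r →
      ∃ p q : ℕ, x (D.α j) = (p:ℤ) • D.α j + (q:ℤ) • D.α k := by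
  intro mm
  induction mm using Nat.strong_induction_on with
  | _ mm ihm =>
  intro w r hwW hwl hr hmr hxe
  by_cases hbr : KMAux.wlen (D.gjk j k) (w * D.gjk j k (ltrB (r+1))) < mm
  · -- peel one more letter
    have hw'W : KMAux.inW (D.gjk j k) (w * D.gjk j k (ltrB (r+1))) :=
      KMAux.inW_mul _ hwW (KMAux.inW_gen _ _)
    have hup : (w * D.gjk j k (ltrB (r+1))) * D.gjk j k (ltrB (r+1)) = w := by
      rw [mul_assoc, D.gjk_invol, mul_one]
    have hwlow : mm ≤ KMAux.wlen (D.gjk j k) (w * D.gjk j k (ltrB (r+1))) + 1 := by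
      have h := KMAux.wlen_mul_gen_le (D.gjk j k) hw'W (ltrB (r+1))
      rw [hup] at h
      omega
    have hxe' : x = (w * D.gjk j k (ltrB (r+1))) * D.suf2 j k (r+1) := by
      rw [suf2_succ, hxe]
      rw [mul_assoc, ← mul_assoc (D.gjk j k (ltrB (r+1))), D.gjk_invol, one_mul]
    exact ihm (mm - 1) (by omega) (w * D.gjk j k (ltrB (r+1))) (r+1) hw'W
      (by omega) (by omega) (by omega) hxe'
  · push_neg at hbr
    -- the previously peeled letter also does not descend
    have hother : mm ≤ KMAux.wlen (D.gjk j k) (w * D.gjk j k (ltrB r)) := by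
      by_contra hlt
      push_neg at hlt
      have hsr : D.suf2 j k r = D.gjk j k (ltrB r) * D.suf2 j k (r-1) := by
        have h := D.suf2_succ j k (r-1)
        rw [show (r-1)+1 = r from by omega] at h
        exact h
      have hxe2 : x = (w * D.gjk j k (ltrB r)) * D.suf2 j k (r-1) := by
        rw [hxe, hsr, mul_assoc]
      have h1 : KMAux.wlen (D.gjk j k) x ≤
          KMAux.wlen (D.gjk j k) (w * D.gjk j k (ltrB r)) +
            KMAux.wlen (D.gjk j k) (D.suf2 j k (r-1)) := by
        rw [hxe2]
        exact KMAux.wlen_mul_le _ (KMAux.inW_mul _ hwW (KMAux.inW_gen _ _)) (D.inW_suf2 j k _)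
      have h2 := D.len2_suf2_le j k (r-1)
      omega
    have hboth : mm ≤ KMAux.wlen (D.gjk j k) (w * D.sX j) ∧
        mm ≤ KMAux.wlen (D.gjk j k) (w * D.sX k) := by
      have hne := ltrB_succ_ne r
      cases hlb : ltrB r
      · rw [hlb] at hother hne
        rw [hne] at hbr
        exact ⟨by simpa using hbr, by simpa using hother⟩
      · rw [hlb] at hother hne
        rw [hne] at hbr
        exact ⟨by simpa using hother, by simpa using hbr⟩
    have hmmn : mm < n := by omega
    obtain ⟨p1, q1, hy1⟩ := IH mm hmmn j k hjk w hwW hwl hboth.1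
    obtain ⟨p2, q2, hy2⟩ := IH mm hmmn k j hjk.symm w (D.inW_swap j k hwW)
      (by rw [D.len2_swap j k hwW]; exact hwl)
      (by
        have hsk : KMAux.inW (D.gjk j k) (D.sX k) := by
          simpa using KMAux.inW_gen (D.gjk j k) false
        rw [D.len2_swap j k (KMAux.inW_mul _ hwW hsk)]
        exact hboth.2)
    -- positivity of the suffix coefficients
    have ha : D.A j k ≤ 0 := D.A_offdiag j k hjk
    have hb : D.A k j ≤ 0 := D.A_offdiag k j hjk.symm
    have hc0 : 0 ≤ D.A j k * D.A k j := by nlinarith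
    have key : 0 ≤ (D.PQ j k r).1 ∧ 0 ≤ (D.PQ j k r).2 := by
      rcases lt_or_ge (D.A j k * D.A k j) 4 with hlt4 | hge4
      · have hc01 : D.A j k * D.A k j = 0 ∨ D.A j k * D.A k j = 1 ∨
            D.A j k * D.A k j = 2 ∨ D.A j k * D.A k j = 3 := by omega
        rcases hc01 with hc | hc | hc | hc
        · -- c = 0
          have h10 : D.A j k = 0 ∧ D.A k j = 0 := by
            rcases mul_eq_zero.mp hc with h0 | h0
            · exact ⟨h0, D.A_zero_iff j k h0⟩
            · exact ⟨D.A_zero_iff k j h0, h0⟩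
          have hrle : r ≤ 1 := by
            by_contra hcon
            have := D.braid_shorten 2 (D.braid_c0 h10.1 h10.2) hwW hwl hmr
              (by omega) (by omega) hxe
            omega
          exact D.PQpos_c0 h10.1 h10.2 r hrle
        · -- c = 1
          have h11 : D.A j k = -1 ∧ D.A k j = -1 := by
            rcases Int.mul_eq_one_iff_eq_one_or_neg_one.mp hc with ⟨hA, hB⟩ | ⟨hA, hB⟩
            · omega
            · exact ⟨hA, hB⟩
          have hrle : r ≤ 2 := by
            by_contra hcon
            have := D.braid_shorten 3 (D.braid_c1 h11.1 h11.2) hwW hwl hmr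
              (by omega) (by omega) hxe
            omega
          exact D.PQpos_c1 h11.1 h11.2 r hrle
        · -- c = 2
          have hrle : r ≤ 3 := by
            by_contra hcon
            have := D.braid_shorten 4 (D.braid_c2 hc ha hb) hwW hwl hmr
              (by omega) (by omega) hxe
            omega
          have h12 : (D.A j k = -1 ∧ D.A k j = -2) ∨ (D.A j k = -2 ∧ D.A k j = -1) := by
            set p := -D.A j k with hp
            set q := -D.A k j with hq
            have hpq : p * q = 2 := by rw [hp, hq, neg_mul_neg]; exact hc
            have hp1 : 1 ≤ p := by
              have : p ≠ 0 := by intro h0; rw [h0] at hpq; simp at hpq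
              omega
            have hq1 : 1 ≤ q := by
              have : q ≠ 0 := by intro h0; rw [h0] at hpq; simp at hpq
              omega
            have hp2 : p ≤ 2 := by nlinarith
            interval_cases p <;> omega
          rcases h12 with ⟨hA, hB⟩ | ⟨hA, hB⟩
          · exact D.PQpos_c2a hA hB r hrle
          · exact D.PQpos_c2b hA hB r hrle
        · -- c = 3
          have hrle : r ≤ 5 := by
            by_contra hcon
            have := D.braid_shorten 6 (D.braid_c3 hc ha hb) hwW hwl hmr
              (by omega) (by omega) hxe
            omega
          have h13 : (D.A j k = -1 ∧ D.A k j = -3) ∨ (D.A j k = -3 ∧ D.A k j = -1) := by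
            set p := -D.A j k with hp
            set q := -D.A k j with hq
            have hpq : p * q = 3 := by rw [hp, hq, neg_mul_neg]; exact hc
            have hp1 : 1 ≤ p := by
              have : p ≠ 0 := by intro h0; rw [h0] at hpq; simp at hpq
              omega
            have hq1 : 1 ≤ q := by
              have : q ≠ 0 := by intro h0; rw [h0] at hpq; simp at hpq
              omega
            have hp2 : p ≤ 3 := by nlinarith
            interval_cases p <;> omega
          rcases h13 with ⟨hA, hB⟩ | ⟨hA, hB⟩
          · exact D.PQpos_c3a hA hB r hrle
          · exact D.PQpos_c3b hA hB r hrle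
      · exact D.PQpos_big hjk hge4 r
    have hxa : x (D.α j) = (D.PQ j k r).1 • w (D.α j) + (D.PQ j k r).2 • w (D.α k) := by
      rw [hxe, mul_apply', D.suf2_alpha j k r, map_comb]
    rw [hxa]
    exact D.comb key.1 key.2 hy1 hy2

lemma stmt_all : ∀ n, D.Stmt n := by
  intro n
  induction n using Nat.strong_induction_on with
  | _ n IH =>
  intro j k hjk x hxW hxl hxs
  rcases Nat.eq_zero_or_pos n with h0 | hpos
  · have hx1 : x = 1 := KMAux.eq_one_of_wlen_eq_zero _ hxW (by omega)
    refine ⟨1, 0, ?_⟩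
    rw [hx1]
    simp; rfl
  · obtain ⟨l, hlp, hll⟩ := KMAux.exists_min_word _ hxW
    rcases List.eq_nil_or_concat l with rfl | ⟨l', u, rfl⟩
    · rw [hxl] at hll; simp at hll; omega
    · have hl'len : l'.length + 1 = n := by
        rw [← hxl, ← hll]; simp
      rw [List.concat_eq_append] at hlp
      rw [KMAux.wprod_concat] at hlp
      cases u
      · -- last letter is s_k
        have hw1W : KMAux.inW (D.gjk j k) (KMAux.wprod (D.gjk j k) l') := ⟨l', rfl⟩
        have hxe : x = KMAux.wprod (D.gjk j k) l' * D.suf2 j k 1 := by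
          rw [suf2_one, ← hlp]; rfl
        have hw1l : KMAux.wlen (D.gjk j k) (KMAux.wprod (D.gjk j k) l') = n - 1 := by
          have h1 : KMAux.wlen (D.gjk j k) (KMAux.wprod (D.gjk j k) l') ≤ n - 1 := by
            have := KMAux.wlen_le (D.gjk j k) l' rfl
            omega
          have h2 := KMAux.wlen_mul_gen_le (D.gjk j k) hw1W false
          rw [← hlp] at hxl
          omega
        exact D.chain hjk IH hxl hxs (n-1) (KMAux.wprod (D.gjk j k) l') 1 hw1W hw1l le_rfl
          (by omega) hxe
      · -- last letter is s_j : contradiction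
        exfalso
        have hxsj : x * D.sX j = KMAux.wprod (D.gjk j k) l' := by
          rw [← hlp, mul_assoc]
          rw [show D.gjk j k true = D.sX j from rfl, D.sX_mul_self, mul_one]
        have := KMAux.wlen_le (D.gjk j k) l' hxsj.symm
        omega

/-- The key lemma: if `n = ℓ(w) ≤ ℓ(w s_j)` then `w (α j)` is a nonnegative
combination of simple roots. -/
lemma keyLemma : ∀ n : ℕ, ∀ w : AddAut X, KMAux.inW D.sX w → KMAux.wlen D.sX w = n →
    ∀ j : I, n ≤ KMAux.wlen D.sX (w * D.sX j) → w (D.α j) ∈ D.Pos := by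
  intro n
  induction n using Nat.strong_induction_on with
  | _ n IH =>
  intro w hwW hwl j hws
  rcases Nat.eq_zero_or_pos n with h0 | hpos
  · have hw1 : w = 1 := KMAux.eq_one_of_wlen_eq_zero _ hwW (by omega)
    rw [hw1]
    exact D.alpha_mem_Pos j
  · obtain ⟨l, hlp, hll⟩ := KMAux.exists_min_word _ hwW
    rcases List.eq_nil_or_concat l with rfl | ⟨l', kk, rfl⟩
    · rw [hwl] at hll; simp at hll; omega
    · have hl'len : l'.length + 1 = n := by rw [← hwl, ← hll]; simp
      rw [List.concat_eq_append] at hlp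
      rw [KMAux.wprod_concat] at hlp
      have hkj : kk ≠ j := by
        intro heq
        have hxsj : w * D.sX j = KMAux.wprod D.sX l' := by
          rw [← hlp, mul_assoc, heq, D.sX_mul_self, mul_one]
        have := KMAux.wlen_le D.sX l' hxsj.symm
        omega
      have hjk : j ≠ kk := hkj.symm
      -- the embedding of dihedral words into I-words
      have hemb : ∀ u : Bool, D.sX ((fun b => if b then j else kk) u) = D.gjk j kk u := by
        intro u; cases u <;> rfl
      have hLle : ∀ z : AddAut X, KMAux.inW (D.gjk j kk) z →
          KMAux.wlen D.sX z ≤ KMAux.wlen (D.gjk j kk) z := by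
        intro z hz
        exact KMAux.wlen_comp_le (D.gjk j kk) D.sX (fun b => if b then j else kk)
          (fun u => hemb u) hz
      have hLin : ∀ z : AddAut X, KMAux.inW (D.gjk j kk) z → KMAux.inW D.sX z := by
        intro z hz
        exact KMAux.inW_comp (D.gjk j kk) D.sX (fun b => if b then j else kk)
          (fun u => hemb u) hz
      set S : Set ℕ := {m | ∃ v xx : AddAut X, KMAux.inW D.sX v ∧ KMAux.inW (D.gjk j kk) xx ∧
        w = v * xx ∧ KMAux.wlen D.sX v = m ∧ m + KMAux.wlen (D.gjk j kk) xx = n} with hS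
      have hskk1 : KMAux.wlen (D.gjk j kk) (D.sX kk) = 1 := by
        have hle : KMAux.wlen (D.gjk j kk) (D.sX kk) ≤ 1 :=
          KMAux.wlen_le (D.gjk j kk) [false] (by simp)
        have hne : D.sX kk ≠ 1 := by
          intro hcon
          have h2 := congrArg (fun f : AddAut X => f (D.α kk)) hcon
          simp only [D.sX_alpha_self, AddAut.one_apply] at h2
          have h3 : (2:ℤ) • D.α kk = 0 := by
            rw [two_zsmul]
            calc D.α kk + D.α kk = -D.α kk + D.α kk := by rw [h2]; rfl
            _ = 0 := by abel
          have := D.zsmul_alpha_eq_zero h3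
          omega
        have : KMAux.wlen (D.gjk j kk) (D.sX kk) ≠ 0 := by
          intro h0
          exact hne (KMAux.eq_one_of_wlen_eq_zero _
            ⟨[false], by simp⟩ h0)
        omega
      have hSne : (n-1) ∈ S := by
        refine ⟨KMAux.wprod D.sX l', D.sX kk, ⟨l', rfl⟩, ⟨[false], by simp⟩, by rw [← hlp], ?_, ?_⟩
        · have h1 : KMAux.wlen D.sX (KMAux.wprod D.sX l') ≤ n - 1 := by
            have := KMAux.wlen_le D.sX l' rfl
            omega
          have h2 := KMAux.wlen_mul_gen_le D.sX ⟨l', rfl⟩ kk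
          rw [hlp, hwl] at h2
          omega
        · rw [hskk1]; omega
      set m0 := sInf S with hm0
      have hm0S : m0 ∈ S := Nat.sInf_mem ⟨n-1, hSne⟩
      have hm0le : m0 ≤ n - 1 := Nat.sInf_le hSne
      obtain ⟨v, xx, hvW, hxxW, hvx, hvl, hsum⟩ := hm0S
      -- both descents for v
      have hclaim : ∀ b : Bool, m0 ≤ KMAux.wlen D.sX (v * D.gjk j kk b) := by
        intro b
        by_contra hlt
        push_neg at hlt
        have hv'W : KMAux.inW D.sX (v * D.gjk j kk b) :=
          KMAux.inW_mul _ hvW (hLin _ (KMAux.inW_gen _ b))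
        have hxx'W : KMAux.inW (D.gjk j kk) (D.gjk j kk b * xx) :=
          KMAux.inW_mul _ (KMAux.inW_gen _ b) hxxW
        have hw' : w = (v * D.gjk j kk b) * (D.gjk j kk b * xx) := by
          rw [hvx, mul_assoc, ← mul_assoc (D.gjk j kk b), D.gjk_invol, one_mul]
        have e1 : n ≤ KMAux.wlen D.sX (v * D.gjk j kk b) +
            KMAux.wlen (D.gjk j kk) (D.gjk j kk b * xx) := by
          have h1 : KMAux.wlen D.sX w ≤ KMAux.wlen D.sX (v * D.gjk j kk b) +
              KMAux.wlen D.sX (D.gjk j kk b * xx) := by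
            rw [hw']
            exact KMAux.wlen_mul_le _ hv'W (hLin _ hxx'W)
          have h2 := hLle _ hxx'W
          omega
        have e2 : KMAux.wlen (D.gjk j kk) (D.gjk j kk b * xx) ≤
            1 + KMAux.wlen (D.gjk j kk) xx :=
          KMAux.wlen_gen_mul_le _ hxxW b
        have hmem : KMAux.wlen D.sX (v * D.gjk j kk b) ∈ S := by
          refine ⟨v * D.gjk j kk b, D.gjk j kk b * xx, hv'W, hxx'W, hw', rfl, ?_⟩
          omega
        have := Nat.sInf_le hmem
        omega
      have hmmn : m0 < n := by omega
      have hvj : v (D.α j) ∈ D.Pos := by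
        refine IH m0 hmmn v hvW hvl j ?_
        have := hclaim true
        simpa using this
      have hvk : v (D.α kk) ∈ D.Pos := by
        refine IH m0 hmmn v hvW hvl kk ?_
        have := hclaim false
        simpa using this
      -- rank-2 hypothesis
      have hr2 : KMAux.wlen (D.gjk j kk) xx ≤ KMAux.wlen (D.gjk j kk) (xx * D.sX j) := by
        by_contra hlt
        push_neg at hlt
        have hxx'W : KMAux.inW (D.gjk j kk) (xx * D.sX j) := by
          have : KMAux.inW (D.gjk j kk) (D.sX j) := by
            simpa using KMAux.inW_gen (D.gjk j kk) true
          exact KMAux.inW_mul _ hxxW this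
        have h1 : KMAux.wlen D.sX (w * D.sX j) ≤
            KMAux.wlen D.sX v + KMAux.wlen D.sX (xx * D.sX j) := by
          rw [hvx, mul_assoc]
          exact KMAux.wlen_mul_le _ hvW (hLin _ hxx'W)
        have h2 := hLle _ hxx'W
        omega
      obtain ⟨p, q, hpq⟩ := D.stmt_all (KMAux.wlen (D.gjk j kk) xx)
        j kk hjk xx hxxW rfl hr2
      have hfin : w (D.α j) = (p:ℤ) • v (D.α j) + (q:ℤ) • v (D.α kk) := by
        rw [hvx, mul_apply', hpq, map_comb]
      rw [hfin]
      exact D.Pos_add (D.Pos_nsmul p hvj) (D.Pos_nsmul q hvk)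

/-! ### Dichotomy and consequences -/

lemma aut_inv_apply (u : AddAut X) (x : X) : u⁻¹ (u x) = x := by
  rw [← mul_apply', inv_mul_cancel]
  rfl

lemma aut_apply_inv (u : AddAut X) (x : X) : u (u⁻¹ x) = x := by
  rw [← mul_apply', mul_inv_cancel]
  rfl

lemma sX_mem_Wg (i : I) : D.sX i ∈ D.Wg := Subgroup.subset_closure ⟨i, rfl⟩

lemma dich {w : AddAut X} (hw : w ∈ D.Wg) (j : I) :
    w (D.α j) ∈ D.PhiPos ∨ w (D.α j) ∈ D.PhiNeg := by
  have hwW : KMAux.inW D.sX w := (D.mem_Wg_iff).mp hw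
  rcases le_or_gt (KMAux.wlen D.sX w) (KMAux.wlen D.sX (w * D.sX j)) with hle | hlt
  · exact Or.inl ⟨D.mem_Phi hw j, D.keyLemma _ w hwW rfl j hle⟩
  · right
    have hw' : KMAux.inW D.sX (w * D.sX j) := KMAux.inW_mul _ hwW ⟨[j], by simp⟩
    have hback : (w * D.sX j) * D.sX j = w := by rw [mul_assoc, D.sX_mul_self, mul_one]
    have hpos : (w * D.sX j) (D.α j) ∈ D.Pos :=
      D.keyLemma _ _ hw' rfl j (by rw [hback]; omega)
    have happ : (w * D.sX j) (D.α j) = - w (D.α j) := by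
      rw [mul_apply', D.sX_alpha_self, map_neg]
    rw [phiNeg_iff]
    have hwg' : w * D.sX j ∈ D.Wg := D.Wg.mul_mem hw (D.sX_mem_Wg j)
    refine ⟨?_, ?_⟩
    · rw [← happ]; exact D.mem_Phi hwg' j
    · rw [← happ]; exact hpos

lemma root_dich {β : X} (hβ : β ∈ D.Phi) : β ∈ D.PhiPos ∨ β ∈ D.PhiNeg := by
  obtain ⟨⟨u, j⟩, hu, rfl⟩ := hβ
  exact D.dich hu j

lemma sum_ite_alpha (j : I) : ∑ m, (if m = j then (1:ℤ) else 0) • D.α m = D.α j := by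
  rw [Finset.sum_eq_single j]
  · simp
  · intro b _ hb; simp [hb]
  · intro hj; exact absurd (Finset.mem_univ j) hj

lemma mult_lemma {β : X} (hβ : β ∈ D.Phi) {i : I} {c : ℤ} (hc : β = c • D.α i) :
    β = D.α i ∨ β = - D.α i := by
  obtain ⟨⟨u, j⟩, hu, hβu⟩ := hβ
  have hγΦ : u⁻¹ (D.α i) ∈ D.Phi :=
    D.Phi_invariant (D.Wg.inv_mem hu) (D.alpha_mem_Phi i)
  have hαj : D.α j = c • (u⁻¹ (D.α i)) := by
    rw [← map_zsmul, ← hc, hβu, aut_inv_apply]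
  rcases D.root_dich hγΦ with hp | hn
  · obtain ⟨d, hd⟩ := hp.2
    have h1 : ∑ m, (c * (d m : ℤ)) • D.α m = D.α j := by
      rw [eq_comm, hαj, hd, Finset.smul_sum]
      congr 1; funext m; rw [smul_smul]
    have h2 : ∑ m, ((c * (d m : ℤ)) - (if m = j then 1 else 0)) • D.α m = 0 := by
      simp only [sub_smul]
      rw [Finset.sum_sub_distrib, h1, D.sum_ite_alpha j, sub_self]
    have h3 := D.coeff_eq_zero h2 j
    norm_num at h3
    have hc1 : c = 1 := by
      rcases Int.mul_eq_one_iff_eq_one_or_neg_one.mp (by linarith : c * (d j : ℤ) = 1) with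
        ⟨h4, _⟩ | ⟨_, h4⟩
      · exact h4
      · have := Int.natCast_nonneg (d j); omega
    left; rw [hc, hc1, one_smul]
  · obtain ⟨d, hd⟩ := (D.phiNeg_iff.mp hn).2
    have h1 : ∑ m, ((-c) * (d m : ℤ)) • D.α m = D.α j := by
      have : D.α j = (-c) • (- (u⁻¹ (D.α i))) := by rw [smul_neg, neg_smul, neg_neg, hαj]
      rw [eq_comm, this, hd, Finset.smul_sum]
      congr 1; funext m; rw [smul_smul]
    have h2 : ∑ m, (((-c) * (d m : ℤ)) - (if m = j then 1 else 0)) • D.α m = 0 := by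
      simp only [sub_smul]
      rw [Finset.sum_sub_distrib, h1, D.sum_ite_alpha j, sub_self]
    have h3 := D.coeff_eq_zero h2 j
    norm_num at h3
    have hc1 : c = -1 := by
      rcases Int.mul_eq_one_iff_eq_one_or_neg_one.mp (by linarith : (-c) * (d j : ℤ) = 1) with
        ⟨h4, _⟩ | ⟨_, h4⟩
      · omega
      · have := Int.natCast_nonneg (d j); omega
    right; rw [hc, hc1, neg_one_zsmul]

lemma sX_perm {i : I} {β : X} (hβ : β ∈ D.PhiPos) (hne : β ≠ D.α i) :
    D.sX i β ∈ D.PhiPos := by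
  have hsw : D.sX i β ∈ D.Phi := D.Phi_invariant (D.sX_mem_Wg i) hβ.1
  rcases D.root_dich hsw with hp | hn
  · exact hp
  · exfalso
    obtain ⟨c, hc⟩ := hβ.2
    obtain ⟨d, hd⟩ := (D.phiNeg_iff.mp hn).2
    have hsum : ∑ m, (((c m : ℤ) + (d m : ℤ)) - (if m = i then D.pr (D.αv i) β else 0)) •
        D.α m = 0 := by
      simp only [sub_smul, add_smul]
      rw [Finset.sum_sub_distrib, Finset.sum_add_distrib, ← hc, ← hd]
      have hite : ∑ m, (if m = i then D.pr (D.αv i) β else 0) • D.α m =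
          D.pr (D.αv i) β • D.α i := by
        rw [Finset.sum_eq_single i]
        · simp
        · intro b _ hb; simp [hb]
        · intro hi; exact absurd (Finset.mem_univ i) hi
      rw [hite, sX_apply]
      abel
    have hcoeff := D.coeff_eq_zero hsum
    have hci : ∀ m, m ≠ i → (c m : ℤ) = 0 := by
      intro m hm
      have := hcoeff m
      simp only [if_neg hm, sub_zero] at this
      have h1 := Int.natCast_nonneg (c m)
      have h2 := Int.natCast_nonneg (d m)
      omega
    have hβi : β = ((c i : ℤ)) • D.α i := by
      rw [hc, Finset.sum_eq_single i]
      · intro b _ hb; rw [hci b hb, zero_smul]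
      · intro hi; exact absurd (Finset.mem_univ i) hi
    rcases D.mult_lemma hβ.1 hβi with h1 | h1
    · exact hne h1
    · refine D.not_pos_and_neg hβ ?_
      rw [phiNeg_iff, h1, neg_neg]
      exact D.alpha_mem_PhiPos i

lemma sX_perm_neg {i : I} {β : X} (hβ : β ∈ D.PhiNeg) (hne : β ≠ - D.α i) :
    D.sX i β ∈ D.PhiNeg := by
  have h1 : -β ∈ D.PhiPos := D.phiNeg_iff.mp hβ
  have h2 : -β ≠ D.α i := by
    intro h
    exact hne (by rw [← h, neg_neg])
  have h3 := D.sX_perm h1 h2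
  rw [phiNeg_iff, ← map_neg]
  exact h3

lemma invSet_finite {w : AddAut X} (hw : w ∈ D.Wg) : (D.invSet w).Finite := by
  obtain ⟨l, rfl⟩ := D.mem_Wg_iff.mp hw
  clear hw
  induction l with
  | nil =>
      convert Set.finite_empty
      ext β
      simp only [invSet, Set.mem_setOf_eq, Set.mem_empty_iff_false, iff_false, not_and]
      intro hP hN
      exact D.not_pos_and_neg hP (by exact hN)
  | cons u t ih =>
      have htW : KMAux.wprod D.sX t ∈ D.Wg := D.mem_Wg_iff.mpr ⟨t, rfl⟩
      refine Set.Finite.subset (Set.Finite.union ih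
        (Set.finite_singleton ((KMAux.wprod D.sX t)⁻¹ (D.α u)))) ?_
      intro β hβ
      obtain ⟨hβP, hβN⟩ := hβ
      rw [KMAux.wprod_cons] at hβN
      have hβN' : D.sX u ((KMAux.wprod D.sX t) β) ∈ D.PhiNeg := by
        simpa [mul_apply'] using hβN
      have hβΦ : (KMAux.wprod D.sX t) β ∈ D.Phi := D.Phi_invariant htW hβP.1
      rcases D.root_dich hβΦ with hp | hn
      · by_cases he : (KMAux.wprod D.sX t) β = D.α u
        · right
          rw [Set.mem_singleton_iff, ← he, aut_inv_apply]
        · exact absurd (D.sX_perm hp he) (fun hc => D.not_pos_and_neg hc hβN')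
      · exact Or.inl ⟨hβP, hn⟩

lemma F3 {i : I} {v : AddAut X} (hv : v ∈ D.Wg) (h : D.len v < D.len (D.sX i * v)) :
    v⁻¹ (D.α i) ∈ D.PhiPos := by
  have hγΦ : v⁻¹ (D.α i) ∈ D.Phi :=
    D.Phi_invariant (D.Wg.inv_mem hv) (D.alpha_mem_Phi i)
  rcases D.root_dich hγΦ with hp | hn
  · exact hp
  · exfalso
    have hβP : - v⁻¹ (D.α i) ∈ D.PhiPos := D.phiNeg_iff.mp hn
    have hvβ : v (- v⁻¹ (D.α i)) = - D.α i := by rw [map_neg, aut_apply_inv]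
    have hset : D.invSet (D.sX i * v) = D.invSet v \ {- v⁻¹ (D.α i)} := by
      ext δ
      simp only [invSet, Set.mem_setOf_eq, Set.mem_diff, Set.mem_singleton_iff, mul_apply']
      constructor
      · rintro ⟨hδP, hδN⟩
        have hδΦ : v δ ∈ D.Phi := D.Phi_invariant hv hδP.1
        rcases D.root_dich hδΦ with hvp | hvn
        · exfalso
          by_cases he : v δ = D.α i
          · have hδγ : δ = v⁻¹ (D.α i) := by rw [← he, aut_inv_apply]
            exact D.not_pos_and_neg hδP (hδγ ▸ hn)
          · exact D.not_pos_and_neg (D.sX_perm hvp he) hδN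
        · refine ⟨⟨hδP, hvn⟩, ?_⟩
          intro hδβ
          have : v δ = - D.α i := by rw [hδβ, hvβ]
          rw [this] at hδN
          have : D.sX i (- D.α i) = D.α i := by
            rw [map_neg, D.sX_alpha_self, neg_neg]
          rw [this] at hδN
          exact D.not_pos_and_neg (D.alpha_mem_PhiPos i) hδN
      · rintro ⟨⟨hδP, hδN⟩, hne⟩
        refine ⟨hδP, ?_⟩
        have hvδne : v δ ≠ - D.α i := by
          intro he
          apply hne
          rw [← aut_inv_apply v δ, he, map_neg]
        exact D.sX_perm_neg hδN hvδne
    have hβinv : - v⁻¹ (D.α i) ∈ D.invSet v := by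
      refine ⟨hβP, ?_⟩
      rw [hvβ, phiNeg_iff, neg_neg]
      exact D.alpha_mem_PhiPos i
    have hfin : (D.invSet v).Finite := D.invSet_finite hv
    have hcard := Set.ncard_diff_singleton_add_one hβinv hfin
    have hlen : D.len (D.sX i * v) = (D.invSet v \ {- v⁻¹ (D.α i)}).ncard := by
      unfold len
      rw [hset]
    rw [hlen] at h
    unfold len at h
    omega

lemma mem_invSet {u : AddAut X} {β : X} :
    β ∈ D.invSet u ↔ β ∈ D.PhiPos ∧ u β ∈ D.PhiNeg := Iff.rfl

lemma sX_sX (i : I) (x : X) : D.sX i (D.sX i x) = x := D.sX_invol i x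

lemma main15 (i : I) (v : AddAut X) (hv : v ∈ D.Wg)
    (h : D.len v < D.len (D.sX i * v)) (w : AddAut X) (hw : w ∈ D.Wg) :
    D.rlen (D.sX i * v) w = D.rlen v (D.sX i * w) - 1 := by
  have hvP : v⁻¹ (D.α i) ∈ D.PhiPos := D.F3 hv h
  have hwinv : w⁻¹ ∈ D.Wg := D.Wg.inv_mem hw
  have hvinv : v⁻¹ ∈ D.Wg := D.Wg.inv_mem hv
  have hinj : Function.Injective (⇑(D.sX i)) := (D.sX_invol i).injective
  -- set names
  have hsv : (D.sX i * v)⁻¹ = v⁻¹ * D.sX i := by rw [mul_inv_rev, D.sX_inv]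
  have hsw : (D.sX i * w)⁻¹ = w⁻¹ * D.sX i := by rw [mul_inv_rev, D.sX_inv]
  -- useful membership facts
  have hBnot : D.α i ∉ D.invSet v⁻¹ := by
    intro hmem
    exact D.not_pos_and_neg hvP hmem.2
  have hB'i : D.α i ∈ D.invSet (v⁻¹ * D.sX i) := by
    refine ⟨D.alpha_mem_PhiPos i, ?_⟩
    rw [mul_apply', D.sX_alpha_self, map_neg, phiNeg_iff, neg_neg]
    exact hvP
  -- S1 : image of A \ B' is (A' \ B) \ {α i}
  have S1 : (⇑(D.sX i)) '' (D.invSet w⁻¹ \ D.invSet (v⁻¹ * D.sX i)) =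
      (D.invSet (w⁻¹ * D.sX i) \ D.invSet v⁻¹) \ {D.α i} := by
    ext γ
    constructor
    · rintro ⟨β, ⟨hβA, hβB'⟩, rfl⟩
      have hβP : β ∈ D.PhiPos := hβA.1
      have hβne : β ≠ D.α i := by
        rintro rfl
        exact hβB' hB'i
      have hsβP : D.sX i β ∈ D.PhiPos := D.sX_perm hβP hβne
      refine ⟨⟨⟨hsβP, ?_⟩, ?_⟩, ?_⟩
      · rw [mul_apply', D.sX_sX]
        exact hβA.2
      · intro hmem
        exact hβB' ⟨hβP, by rw [mul_apply']; exact hmem.2⟩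
      · intro hmem
        rw [Set.mem_singleton_iff] at hmem
        have hβval : β = - D.α i := by
          have h2 := congrArg (⇑(D.sX i)) hmem
          rw [D.sX_sX, D.sX_alpha_self] at h2
          exact h2
        exact D.neg_alpha_not_PhiPos i (hβval ▸ hβP)
    · rintro ⟨⟨⟨hγP, hγA'⟩, hγB⟩, hγne⟩
      rw [Set.mem_singleton_iff] at hγne
      refine ⟨D.sX i γ, ⟨⟨D.sX_perm hγP hγne, ?_⟩, ?_⟩, D.sX_sX i γ⟩
      · rw [mul_apply'] at hγA'
        exact hγA'
      · intro hmem
        apply hγB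
        refine ⟨hγP, ?_⟩
        have := hmem.2
        rw [mul_apply', D.sX_sX] at this
        exact this
  -- S2 : image of (A ∩ B') \ {α i} is A' ∩ B
  have S2 : (⇑(D.sX i)) '' ((D.invSet w⁻¹ ∩ D.invSet (v⁻¹ * D.sX i)) \ {D.α i}) =
      D.invSet (w⁻¹ * D.sX i) ∩ D.invSet v⁻¹ := by
    ext γ
    constructor
    · rintro ⟨β, ⟨⟨hβA, hβB'⟩, hβne⟩, rfl⟩
      rw [Set.mem_singleton_iff] at hβne
      have hβP : β ∈ D.PhiPos := hβA.1
      refine ⟨⟨D.sX_perm hβP hβne, ?_⟩, ⟨D.sX_perm hβP hβne, ?_⟩⟩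
      · rw [mul_apply', D.sX_sX]
        exact hβA.2
      · have := hβB'.2
        rw [mul_apply'] at this
        exact this
    · rintro ⟨⟨hγP, hγA'⟩, hγB⟩
      have hγne : γ ≠ D.α i := by
        rintro rfl
        exact D.not_pos_and_neg hvP hγB.2
      refine ⟨D.sX i γ, ⟨⟨⟨D.sX_perm hγP hγne, ?_⟩, ⟨D.sX_perm hγP hγne, ?_⟩⟩, ?_⟩, D.sX_sX i γ⟩
      · rw [mul_apply'] at hγA'
        exact hγA'
      · rw [mul_apply', D.sX_sX]
        exact hγB.2
      · intro hmem
        rw [Set.mem_singleton_iff] at hmem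
        have : γ = - D.α i := by
          have := congrArg (⇑(D.sX i)) hmem
          rw [D.sX_sX, D.sX_alpha_self] at this
          exact this
        exact D.neg_alpha_not_PhiPos i (this ▸ hγP)
  -- finiteness
  have hAfin : (D.invSet w⁻¹).Finite := D.invSet_finite hwinv
  have hA'fin : (D.invSet (w⁻¹ * D.sX i)).Finite :=
    D.invSet_finite (D.Wg.mul_mem hwinv (D.sX_mem_Wg i))
  -- cardinality identities from the bijections
  have n1 : ((D.invSet (w⁻¹ * D.sX i) \ D.invSet v⁻¹) \ {D.α i}).ncard =
      (D.invSet w⁻¹ \ D.invSet (v⁻¹ * D.sX i)).ncard := by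
    rw [← S1]
    exact Set.ncard_image_of_injOn hinj.injOn
  have n2 : (D.invSet (w⁻¹ * D.sX i) ∩ D.invSet v⁻¹).ncard =
      ((D.invSet w⁻¹ ∩ D.invSet (v⁻¹ * D.sX i)) \ {D.α i}).ncard := by
    rw [← S2]
    exact Set.ncard_image_of_injOn hinj.injOn
  -- rlen expressions
  have e1 : D.rlen (D.sX i * v) w =
      ((D.invSet w⁻¹ \ D.invSet (v⁻¹ * D.sX i)).ncard : ℤ) -
        ((D.invSet w⁻¹ ∩ D.invSet (v⁻¹ * D.sX i)).ncard : ℤ) := by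
    unfold rlen
    rw [hsv]
  have e2 : D.rlen v (D.sX i * w) =
      ((D.invSet (w⁻¹ * D.sX i) \ D.invSet v⁻¹).ncard : ℤ) -
        ((D.invSet (w⁻¹ * D.sX i) ∩ D.invSet v⁻¹).ncard : ℤ) := by
    unfold rlen
    rw [hsw]
  rw [e1, e2]
  -- case analysis on the sign of w⁻¹ (α i)
  rcases D.dich hwinv i with hP | hN
  · -- w⁻¹ α_i positive : α i ∈ A' \ B, α i ∉ A ∩ B'
    have hA'mem : D.α i ∈ D.invSet (w⁻¹ * D.sX i) \ D.invSet v⁻¹ := by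
      refine ⟨⟨D.alpha_mem_PhiPos i, ?_⟩, hBnot⟩
      rw [mul_apply', D.sX_alpha_self, map_neg, phiNeg_iff, neg_neg]
      exact hP
    have hAnot : D.α i ∉ D.invSet w⁻¹ ∩ D.invSet (v⁻¹ * D.sX i) := by
      rintro ⟨hmem, -⟩
      exact D.not_pos_and_neg hP hmem.2
    have c1 : ((D.invSet (w⁻¹ * D.sX i) \ D.invSet v⁻¹) \ {D.α i}).ncard + 1 =
        (D.invSet (w⁻¹ * D.sX i) \ D.invSet v⁻¹).ncard :=
      Set.ncard_diff_singleton_add_one hA'mem (hA'fin.diff)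
    have c2 : (D.invSet w⁻¹ ∩ D.invSet (v⁻¹ * D.sX i)) \ {D.α i} =
        D.invSet w⁻¹ ∩ D.invSet (v⁻¹ * D.sX i) :=
      Set.diff_singleton_eq_self hAnot
    rw [c2] at n2
    omega
  · -- w⁻¹ α_i negative : α i ∉ A' \ B, α i ∈ A ∩ B'
    have hA'not : D.α i ∉ D.invSet (w⁻¹ * D.sX i) \ D.invSet v⁻¹ := by
      rintro ⟨hmem, -⟩
      have := hmem.2
      rw [mul_apply', D.sX_alpha_self, map_neg, phiNeg_iff, neg_neg] at this
      exact D.not_pos_and_neg this hN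
    have hAmem : D.α i ∈ D.invSet w⁻¹ ∩ D.invSet (v⁻¹ * D.sX i) := by
      refine ⟨⟨D.alpha_mem_PhiPos i, hN⟩, hB'i⟩
    have c1 : (D.invSet (w⁻¹ * D.sX i) \ D.invSet v⁻¹) \ {D.α i} =
        D.invSet (w⁻¹ * D.sX i) \ D.invSet v⁻¹ :=
      Set.diff_singleton_eq_self hA'not
    have c2 : ((D.invSet w⁻¹ ∩ D.invSet (v⁻¹ * D.sX i)) \ {D.α i}).ncard + 1 =
        (D.invSet w⁻¹ ∩ D.invSet (v⁻¹ * D.sX i)).ncard :=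
      Set.ncard_diff_singleton_add_one hAmem (hAfin.inter_of_left _)
    rw [c1] at n1
    omega
end KM


/-- if `s` is a simple reflection and `sv > v`, then
`ℓ_{sv}(w) = ℓ_v(sw) − 1` for every `w ∈ Wᵛ`. -/
theorem statement15 {I X Y : Type*} [Fintype I] [AddCommGroup X] [AddCommGroup Y]
    (D : KM I X Y)
    (i : I) (v : AddAut X) (hv : v ∈ D.Wg)
    (h : D.len v < D.len (D.sX i * v)) :
    ∀ w : AddAut X, w ∈ D.Wg →
      D.rlen (D.sX i * v) w = D.rlen v (D.sX i * w) - 1 := by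
  intro w hw
  exact D.main15 i v hv h w hw
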